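/- Identify ℝ² ≅ ℂ and fix a ∈ ℝ. For every trigonometric polynomial loop γ(t) = Σ_{k∈F} e^{2πikt}·c_k (F ⊂ ℤ finite, c_k ∈ ℂ), the action S_a(γ) = ∫₀^1 ½|γ'(t)|² dt − (a/2)∫₀^1 Im(conj(γ(t))·γ'(t)) dt satisfies S_a(γ) = Σ_{k∈F} (2π²k² − aπk)·|c_k|². Moreover, if a > 0 and a ∉ 2πℤ, and k₀ is the unique integer with 2πk₀ < a < 2π(k₀+1), then the number of integers k with 2π²k² − aπk < 0 equals k₀ (so the index of the quadratic form S_a, counting complex dimensions as 2 real dimensions, is 2k₀). -/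

import Mathlib

open Real Complex

noncomputable section

/-- The trigonometric polynomial loop `γ(t) = Σ_{k ∈ F} e^{2πikt}·c_k` in ℂ ≅ ℝ². -/
def trigLoop (F : Finset ℤ) (c : ℤ → ℂ) : ℝ → ℂ :=
  fun t => ∑ k ∈ F, Complex.exp (2 * (π : ℂ) * Complex.I * (k : ℂ) * (t : ℂ)) * c k

/-- The Lagrangian action of the constant magnetic field `a` on a contractible loop
`γ : ℝ → ℂ` of period 1: `∫₀¹ ½|γ'|² dt − (a/2)∫₀¹ Im(conj(γ)·γ') dt`. -/
def magAction (a : ℝ) (γ : ℝ → ℂ) : ℝ :=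
  (∫ t in (0:ℝ)..1, (1:ℝ)/2 * ‖deriv γ t‖ ^ 2) -
  (a / 2) * ∫ t in (0:ℝ)..1, ((starRingEnd ℂ) (γ t) * deriv γ t).im


lemma key_int (n : ℤ) :
    (∫ t in (0:ℝ)..1, Complex.exp (2 * (π:ℂ) * Complex.I * (n:ℂ) * (t:ℂ))) =
      if n = 0 then 1 else 0 := by
  split_ifs with h
  · simp [h]
  · have hc : (2 * (π:ℂ) * Complex.I * (n:ℂ)) ≠ 0 := by
      simp [Real.pi_ne_zero, Complex.I_ne_zero, h]
    have key := integral_exp_mul_complex (a := (0:ℝ)) (b := 1) hc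
    simp only [mul_assoc] at key ⊢
    rw [key]
    have hA : 2 * ((π:ℂ) * (Complex.I * ((n:ℂ) * ((1:ℝ):ℂ)))) = (n:ℂ) * (2 * π * Complex.I) := by
      push_cast; ring
    have hB : 2 * ((π:ℂ) * (Complex.I * ((n:ℂ) * ((0:ℝ):ℂ)))) = 0 := by push_cast; ring
    rw [hA, hB, Complex.exp_int_mul_two_pi_mul_I, Complex.exp_zero]
    simp

lemma ortho_sum (F : Finset ℤ) (u v : ℤ → ℂ) :
    (∫ t in (0:ℝ)..1,
        (starRingEnd ℂ) (∑ k ∈ F, Complex.exp (2 * (π:ℂ) * Complex.I * (k:ℂ) * (t:ℂ)) * u k) *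
          (∑ l ∈ F, Complex.exp (2 * (π:ℂ) * Complex.I * (l:ℂ) * (t:ℂ)) * v l))
      = ∑ k ∈ F, (starRingEnd ℂ) (u k) * v k := by
  have hpt : ∀ t : ℝ,
      (starRingEnd ℂ) (∑ k ∈ F, Complex.exp (2 * (π:ℂ) * Complex.I * (k:ℂ) * (t:ℂ)) * u k) *
          (∑ l ∈ F, Complex.exp (2 * (π:ℂ) * Complex.I * (l:ℂ) * (t:ℂ)) * v l)
        = ∑ k ∈ F, ∑ l ∈ F, ((starRingEnd ℂ) (u k) * v l) *
            Complex.exp (2 * (π:ℂ) * Complex.I * ((l - k : ℤ):ℂ) * (t:ℂ)) := by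
    intro t
    rw [map_sum, Finset.sum_mul_sum]
    refine Finset.sum_congr rfl fun k _ => Finset.sum_congr rfl fun l _ => ?_
    rw [map_mul, ← Complex.exp_conj]
    have hc : (starRingEnd ℂ) (2 * (π:ℂ) * Complex.I * (k:ℂ) * (t:ℂ)) +
        2 * (π:ℂ) * Complex.I * (l:ℂ) * (t:ℂ)
        = 2 * (π:ℂ) * Complex.I * ((l - k : ℤ):ℂ) * (t:ℂ) := by
      simp only [map_mul, Complex.conj_I, Complex.conj_ofReal, map_ofNat, map_intCast]
      push_cast; ring
    rw [← hc, Complex.exp_add]; ring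
  have hint : ∀ (n : ℤ) (w : ℂ), IntervalIntegrable
      (fun t : ℝ => w * Complex.exp (2 * (π:ℂ) * Complex.I * (n:ℂ) * (t:ℂ)))
      MeasureTheory.volume 0 1 := by
    intro n w
    apply Continuous.intervalIntegrable
    exact continuous_const.mul ((continuous_const.mul Complex.continuous_ofReal).cexp)
  have keyterm : ∀ k ∈ F, ∀ l ∈ F, (∫ t in (0:ℝ)..1, ((starRingEnd ℂ) (u k) * v l) *
      Complex.exp (2 * (π:ℂ) * Complex.I * ((l - k : ℤ):ℂ) * (t:ℂ)))
      = if l = k then (starRingEnd ℂ) (u k) * v k else 0 := by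
    intro k _ l _
    rw [intervalIntegral.integral_const_mul, key_int]
    split_ifs with h1 h2 h2
    · simp [sub_eq_zero.mp h1]
    · exact absurd (sub_eq_zero.mp h1) h2
    · exact absurd (by rw [h2, sub_self]) h1
    · simp
  have step1 : (∫ t in (0:ℝ)..1,
        (starRingEnd ℂ) (∑ k ∈ F, Complex.exp (2 * (π:ℂ) * Complex.I * (k:ℂ) * (t:ℂ)) * u k) *
          (∑ l ∈ F, Complex.exp (2 * (π:ℂ) * Complex.I * (l:ℂ) * (t:ℂ)) * v l))
      = ∫ t in (0:ℝ)..1, ∑ k ∈ F, ∑ l ∈ F, ((starRingEnd ℂ) (u k) * v l) *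
            Complex.exp (2 * (π:ℂ) * Complex.I * ((l - k : ℤ):ℂ) * (t:ℂ)) :=
        intervalIntegral.integral_congr (fun t _ => hpt t)
  have step2 : (∫ t in (0:ℝ)..1, ∑ k ∈ F, ∑ l ∈ F, ((starRingEnd ℂ) (u k) * v l) *
            Complex.exp (2 * (π:ℂ) * Complex.I * ((l - k : ℤ):ℂ) * (t:ℂ)))
      = ∑ k ∈ F, ∫ t in (0:ℝ)..1, ∑ l ∈ F, ((starRingEnd ℂ) (u k) * v l) *
            Complex.exp (2 * (π:ℂ) * Complex.I * ((l - k : ℤ):ℂ) * (t:ℂ)) :=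
        intervalIntegral.integral_finset_sum
          (f := fun k t => ∑ l ∈ F, ((starRingEnd ℂ) (u k) * v l) *
            Complex.exp (2 * (π:ℂ) * Complex.I * ((l - k : ℤ):ℂ) * (t:ℂ)))
          (fun k _ => by
            have h := IntervalIntegrable.sum
              (f := fun l t => ((starRingEnd ℂ) (u k) * v l) *
                Complex.exp (2 * (π:ℂ) * Complex.I * ((l - k : ℤ):ℂ) * (t:ℂ)))
              F (fun l _ => hint (l - k) ((starRingEnd ℂ) (u k) * v l))
            rwa [Finset.sum_fn] at h)
  have step3 : ∀ k ∈ F, (∫ t in (0:ℝ)..1, ∑ l ∈ F, ((starRingEnd ℂ) (u k) * v l) *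
            Complex.exp (2 * (π:ℂ) * Complex.I * ((l - k : ℤ):ℂ) * (t:ℂ)))
      = ∑ l ∈ F, ∫ t in (0:ℝ)..1, ((starRingEnd ℂ) (u k) * v l) *
            Complex.exp (2 * (π:ℂ) * Complex.I * ((l - k : ℤ):ℂ) * (t:ℂ)) := fun k _ =>
        intervalIntegral.integral_finset_sum
          (f := fun l t => ((starRingEnd ℂ) (u k) * v l) *
            Complex.exp (2 * (π:ℂ) * Complex.I * ((l - k : ℤ):ℂ) * (t:ℂ)))
          (fun l _ => hint (l - k) ((starRingEnd ℂ) (u k) * v l))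
  rw [step1, step2, Finset.sum_congr rfl step3]
  refine Finset.sum_congr rfl fun k hk => ?_
  rw [Finset.sum_congr rfl (keyterm k hk), Finset.sum_ite_eq' F k]
  simp [hk]

lemma trigLoop_hasDerivAt (F : Finset ℤ) (c : ℤ → ℂ) (t : ℝ) :
    HasDerivAt (trigLoop F c)
      (∑ k ∈ F, Complex.exp (2 * (π:ℂ) * Complex.I * (k:ℂ) * (t:ℂ)) *
        (2 * (π:ℂ) * Complex.I * (k:ℂ) * c k)) t := by
  have h : ∀ k ∈ F, HasDerivAt
      (fun t : ℝ => Complex.exp (2 * (π:ℂ) * Complex.I * (k:ℂ) * (t:ℂ)) * c k)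
      (Complex.exp (2 * (π:ℂ) * Complex.I * (k:ℂ) * (t:ℂ)) *
        (2 * (π:ℂ) * Complex.I * (k:ℂ) * c k)) t := by
    intro k _
    have h1 : HasDerivAt (fun t : ℝ => 2 * (π:ℂ) * Complex.I * (k:ℂ) * (t:ℂ))
        (2 * (π:ℂ) * Complex.I * (k:ℂ)) t := by
      simpa using (Complex.ofRealCLM.hasDerivAt (x := t)).const_mul
        (2 * (π:ℂ) * Complex.I * (k:ℂ))
    have h3 := (h1.cexp).mul_const (c k)
    exact h3.congr_deriv (by ring)
  have hs := HasDerivAt.sum h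
  rw [Finset.sum_fn] at hs
  exact hs

lemma trigLoop_deriv (F : Finset ℤ) (c : ℤ → ℂ) :
    deriv (trigLoop F c) = fun t : ℝ =>
      ∑ k ∈ F, Complex.exp (2 * (π:ℂ) * Complex.I * (k:ℂ) * (t:ℂ)) *
        (2 * (π:ℂ) * Complex.I * (k:ℂ) * c k) :=
  funext fun t => (trigLoop_hasDerivAt F c t).deriv

lemma cont_sum (F : Finset ℤ) (w : ℤ → ℂ) :
    Continuous (fun t : ℝ => ∑ k ∈ F, Complex.exp (2 * (π:ℂ) * Complex.I * (k:ℂ) * (t:ℂ)) * w k) :=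
  continuous_finset_sum _ fun k _ =>
    ((continuous_const.mul Complex.continuous_ofReal).cexp).mul continuous_const

lemma conj_self (z : ℂ) : (starRingEnd ℂ) z * z = ((‖z‖^2 : ℝ) : ℂ) := by
  rw [mul_comm, Complex.mul_conj]
  norm_cast
  rw [Complex.normSq_eq_norm_sq]

lemma part1 (a : ℝ) (F : Finset ℤ) (c : ℤ → ℂ) :
    magAction a (trigLoop F c) =
      ∑ k ∈ F, (2 * π ^ 2 * (k : ℝ) ^ 2 - a * π * (k : ℝ)) * ‖c k‖ ^ 2 := by
  set w : ℤ → ℂ := fun k => 2 * (π:ℂ) * Complex.I * (k:ℂ) * c k with hw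
  have hd := trigLoop_deriv F c
  have hcont : Continuous (fun t : ℝ => ∑ k ∈ F,
      Complex.exp (2 * (π:ℂ) * Complex.I * (k:ℂ) * (t:ℂ)) * (2 * (π:ℂ) * Complex.I * (k:ℂ) * c k)) :=
    cont_sum F w
  have hcontγ : Continuous (fun t : ℝ => ∑ k ∈ F,
      Complex.exp (2 * (π:ℂ) * Complex.I * (k:ℂ) * (t:ℂ)) * c k) := cont_sum F c
  have hre : ∀ z : ℂ, ‖z‖^2 = ((starRingEnd ℂ) z * z).re := fun z => by
    rw [conj_self, Complex.ofReal_re]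
  -- first integral
  have hInt1 : IntervalIntegrable (fun t : ℝ =>
      (starRingEnd ℂ) (deriv (trigLoop F c) t) * deriv (trigLoop F c) t)
      MeasureTheory.volume 0 1 := by
    rw [hd]
    exact ((Complex.continuous_conj.comp hcont).mul hcont).intervalIntegrable 0 1
  have e1 : (∫ t in (0:ℝ)..1, ‖deriv (trigLoop F c) t‖^2)
      = (∫ t in (0:ℝ)..1,
          (starRingEnd ℂ) (deriv (trigLoop F c) t) * deriv (trigLoop F c) t).re := by
    rw [show (∫ t in (0:ℝ)..1,
          (starRingEnd ℂ) (deriv (trigLoop F c) t) * deriv (trigLoop F c) t).re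
        = Complex.reCLM (∫ t in (0:ℝ)..1,
          (starRingEnd ℂ) (deriv (trigLoop F c) t) * deriv (trigLoop F c) t) from rfl,
      ← ContinuousLinearMap.intervalIntegral_comp_comm Complex.reCLM hInt1]
    exact intervalIntegral.integral_congr fun t _ => hre _
  have e2 : (∫ t in (0:ℝ)..1,
        (starRingEnd ℂ) (deriv (trigLoop F c) t) * deriv (trigLoop F c) t)
      = ∑ k ∈ F, (starRingEnd ℂ) (w k) * w k := by
    simp only [hd]
    exact ortho_sum F w w
  have hwn : ∀ k : ℤ, ‖w k‖^2 = 4 * π^2 * (k:ℝ)^2 * ‖c k‖^2 := by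
    intro k
    rw [hw]
    simp only [norm_mul, Complex.norm_I, Complex.norm_real, Complex.norm_intCast,
      Complex.norm_ofNat, Real.norm_eq_abs, mul_pow, one_pow, _root_.sq_abs,
      abs_of_pos Real.pi_pos]
    ring
  have e2' : (∑ k ∈ F, (starRingEnd ℂ) (w k) * w k).re
      = ∑ k ∈ F, 4 * π^2 * (k:ℝ)^2 * ‖c k‖^2 := by
    rw [Complex.re_sum]
    exact Finset.sum_congr rfl fun k _ => by rw [conj_self, Complex.ofReal_re, hwn]
  -- second integral
  have hInt2 : IntervalIntegrable (fun t : ℝ =>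
      (starRingEnd ℂ) (trigLoop F c t) * deriv (trigLoop F c) t)
      MeasureTheory.volume 0 1 := by
    rw [hd]
    exact ((Complex.continuous_conj.comp hcontγ).mul hcont).intervalIntegrable 0 1
  have e3 : (∫ t in (0:ℝ)..1,
        (starRingEnd ℂ) (trigLoop F c t) * deriv (trigLoop F c) t)
      = ∑ k ∈ F, (starRingEnd ℂ) (c k) * w k := by
    simp only [hd, trigLoop]
    exact ortho_sum F c w
  have e4 : (∫ t in (0:ℝ)..1,
        ((starRingEnd ℂ) (trigLoop F c t) * deriv (trigLoop F c) t).im)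
      = (∑ k ∈ F, (starRingEnd ℂ) (c k) * w k).im := by
    rw [← e3, show (∫ t in (0:ℝ)..1,
          (starRingEnd ℂ) (trigLoop F c t) * deriv (trigLoop F c) t).im
        = Complex.imCLM (∫ t in (0:ℝ)..1,
          (starRingEnd ℂ) (trigLoop F c t) * deriv (trigLoop F c) t) from rfl,
      ← ContinuousLinearMap.intervalIntegral_comp_comm Complex.imCLM hInt2]
    exact intervalIntegral.integral_congr fun t _ => rfl
  have e4' : (∑ k ∈ F, (starRingEnd ℂ) (c k) * w k).im
      = ∑ k ∈ F, 2 * π * (k:ℝ) * ‖c k‖^2 := by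
    rw [Complex.im_sum]
    refine Finset.sum_congr rfl fun k _ => ?_
    have : (starRingEnd ℂ) (c k) * w k
        = 2 * (π:ℂ) * Complex.I * (k:ℂ) * ((‖c k‖^2 : ℝ) : ℂ) := by
      rw [hw, ← conj_self (c k)]; ring
    rw [this, show (2 * (π:ℂ) * Complex.I * (k:ℂ) * ((‖c k‖^2 : ℝ):ℂ))
        = (((2 * π * (k:ℝ) * ‖c k‖^2 : ℝ)):ℂ) * Complex.I from by push_cast; ring]
    simp
    exact Or.inl (by rw [← Complex.ofReal_pow, Complex.ofReal_re])
  -- assemble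
  rw [magAction, intervalIntegral.integral_const_mul, e1, e2, e2', e4, e4',
    Finset.mul_sum, Finset.mul_sum, ← Finset.sum_sub_distrib]
  exact Finset.sum_congr rfl fun k _ => by ring

lemma part2 (a : ℝ) (ha : 0 < a) (k₀ : ℤ)
    (h1 : 2 * π * k₀ < a) (h2 : a < 2 * π * (k₀ + 1)) :
    (({k : ℤ | 2 * π ^ 2 * (k : ℝ) ^ 2 - a * π * (k : ℝ) < 0}.ncard : ℤ) = k₀) := by
  have hπ := Real.pi_pos
  have hk₀ : 0 ≤ k₀ := by
    have h3 : (0:ℝ) < 2 * π * ((k₀:ℝ) + 1) := by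
      have := ha.trans h2; push_cast at this ⊢; linarith
    have h4 : (0:ℝ) < (k₀:ℝ) + 1 := by nlinarith
    have : (-1:ℤ) < k₀ := by exact_mod_cast (by linarith : (-1:ℝ) < (k₀:ℝ))
    omega
  have hset : {k : ℤ | 2 * π ^ 2 * (k : ℝ) ^ 2 - a * π * (k : ℝ) < 0}
      = ↑(Finset.Icc (1:ℤ) k₀) := by
    ext k
    simp only [Set.mem_setOf_eq, Finset.coe_Icc, Set.mem_Icc]
    constructor
    · intro h
      have hk1 : 1 ≤ k := by
        by_contra hc
        push_neg at hc
        have hkr : (k:ℝ) ≤ 0 := by exact_mod_cast (by omega : k ≤ 0)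
        nlinarith [sq_nonneg (k:ℝ), mul_pos ha hπ]
      have hkpos : (0:ℝ) < (k:ℝ) := by exact_mod_cast (by omega : (0:ℤ) < k)
      have hka : 2 * π * (k:ℝ) < a := by nlinarith [mul_pos hπ hkpos]
      have h5 : (k:ℝ) < (k₀:ℝ) + 1 := by
        push_cast at h2; nlinarith
      have : k < k₀ + 1 := by exact_mod_cast (by push_cast; linarith : (k:ℝ) < ((k₀+1:ℤ):ℝ))
      exact ⟨hk1, by omega⟩
    · rintro ⟨hk1, hk2⟩
      have hk1r : (1:ℝ) ≤ (k:ℝ) := by exact_mod_cast hk1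
      have hk2r : (k:ℝ) ≤ (k₀:ℝ) := by exact_mod_cast hk2
      have hkpos : (0:ℝ) < (k:ℝ) := by linarith
      have hka : 2 * π * (k:ℝ) < a := by nlinarith
      nlinarith [mul_pos hπ hkpos]
  rw [hset, Set.ncard_coe_finset, Int.card_Icc]
  omega

theorem fourier_action_and_index (a : ℝ) :
    (∀ (F : Finset ℤ) (c : ℤ → ℂ),
      magAction a (trigLoop F c) =
        ∑ k ∈ F, (2 * π ^ 2 * (k : ℝ) ^ 2 - a * π * (k : ℝ)) * ‖c k‖ ^ 2) ∧
    (0 < a → (∀ m : ℤ, a ≠ 2 * π * m) → ∀ k₀ : ℤ,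
      2 * π * k₀ < a → a < 2 * π * (k₀ + 1) →
      (({k : ℤ | 2 * π ^ 2 * (k : ℝ) ^ 2 - a * π * (k : ℝ) < 0}.ncard : ℤ) = k₀)) :=
  ⟨fun F c => part1 a F c, fun ha _ k₀ h1 h2 => part2 a ha k₀ h1 h2⟩
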